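/- arXiv:1009.0097 — 3 statements merged into one kernel-verified Lean document; each statement's English description precedes it below -/
import Mathlib

section
/- For all integers 1 ≤ k ≤ n and all x ∈ [0,1], the function x ↦ B_{k,n}(x,q) is differentiable and its derivative at x equals n·(B_{k-1,n-1}(x,q) − B_{k,n-1}(x,q))·(log q/(q−1))·q^x. -/
/-- The q-number `[x]_q = (1 - q^x)/(1 - q)` for real `x`. -/
noncomputable def qNum (q x : ℝ) : ℝ := (1 - q ^ x) / (1 - q)

/-- The q-Bernstein polynomial `B_{k,n}(x,q) = C(n,k)·[x]_q^k·[1-x]_{1/q}^{n-k}`. -/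
noncomputable def qBernstein (q : ℝ) (k n : ℕ) (x : ℝ) : ℝ :=
  (n.choose k : ℝ) * qNum q x ^ k * qNum q⁻¹ (1 - x) ^ (n - k)

lemma qNum_inv_one_sub (q : ℝ) (hq : 0 < q) (hq1 : q ≠ 1) (t : ℝ) :
    qNum q⁻¹ (1 - t) = 1 - qNum q t := by
  have hq0 : q ≠ 0 := hq.ne'
  have h1 : (1 : ℝ) - q ≠ 0 := sub_ne_zero.mpr (Ne.symm hq1)
  unfold qNum
  rw [Real.inv_rpow hq.le, Real.rpow_sub hq, Real.rpow_one]
  have hqt : q ^ t ≠ 0 := (Real.rpow_pos_of_pos hq t).ne'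
  have h2 : q - 1 ≠ 0 := sub_ne_zero.mpr hq1
  have h3 : (1:ℝ) - q⁻¹ ≠ 0 := by
    intro h
    apply hq1
    have := sub_eq_zero.mp h
    field_simp at this
    linarith
  field_simp
  ring

lemma qNum_hasDerivAt (q : ℝ) (hq : 0 < q) (hq1 : q ≠ 1) (x : ℝ) :
    HasDerivAt (fun t : ℝ => qNum q t) (q ^ x * Real.log q / (q - 1)) x := by
  have h1 : q - 1 ≠ 0 := sub_ne_zero.mpr hq1
  have hexp : HasDerivAt (fun t : ℝ => q ^ t) (q ^ x * Real.log q) x :=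
    (Real.hasStrictDerivAt_const_rpow hq x).hasDerivAt
  have h := ((hasDerivAt_const x (1:ℝ)).sub hexp).div_const (1 - q)
  have h2 : (1:ℝ) - q ≠ 0 := fun h => h1 (by linarith [sub_eq_zero.mp h])
  have : (0 - q ^ x * Real.log q) / (1 - q) = q ^ x * Real.log q / (q - 1) := by
    rw [div_eq_div_iff h2 h1]; ring
  rw [this] at h
  exact h

/-- For `1 ≤ k ≤ n`, the derivative of `x ↦ B_{k,n}(x,q)` at `x ∈ [0,1]` equals
`n·(B_{k-1,n-1}(x,q) − B_{k,n-1}(x,q))·(log q/(q−1))·q^x`. -/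
theorem qBernstein_hasDerivAt (q : ℝ) (hq : 0 < q) (hq1 : q < 1)
    (n k : ℕ) (hk1 : 1 ≤ k) (hk : k ≤ n) (x : ℝ) (hx : x ∈ Set.Icc (0 : ℝ) 1) :
    HasDerivAt (fun t : ℝ => qBernstein q k n t)
      ((n : ℝ) * (qBernstein q (k - 1) (n - 1) x - qBernstein q k (n - 1) x)
        * (Real.log q / (q - 1)) * q ^ x) x := by
  have hq1' : q ≠ 1 := ne_of_lt hq1
  obtain ⟨j, rfl⟩ : ∃ j, k = j + 1 := ⟨k - 1, by omega⟩
  obtain ⟨m, rfl⟩ : ∃ m, n = m + 1 := ⟨n - 1, by omega⟩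
  have hjm : j ≤ m := by omega
  have e1 : m + 1 - (j + 1) = m - j := by omega
  have e2 : j + 1 - 1 = j := by omega
  have e3 : m + 1 - 1 = m := by omega
  have e4 : m - (j + 1) = m - j - 1 := by omega
  simp only [qBernstein, qNum_inv_one_sub q hq hq1', e1, e2, e3, e4]
  have ha := qNum_hasDerivAt q hq hq1' x
  have h := (((ha.pow (j + 1)).const_mul (((m + 1).choose (j + 1) : ℝ))).mul
      (((hasDerivAt_const x (1:ℝ)).sub ha).pow (m - j)))
  convert h using 1
  · rfl
  · rfl
  · funext t; simp
  simp only [Pi.pow_apply, Pi.sub_apply]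
  have c1 : ((m : ℝ) + 1) * (m.choose j) = ((m + 1).choose (j + 1) : ℝ) * (j + 1) := by
    exact_mod_cast congrArg (Nat.cast : ℕ → ℝ) (Nat.add_one_mul_choose_eq m j)
  have c2 : ((m.choose (j + 1) : ℝ)) * (m + 1)
      = ((m + 1).choose (j + 1) : ℝ) * ((m - j : ℕ) : ℝ) := by
    have := Nat.choose_mul_succ_eq m (j + 1)
    have h' : m + 1 - (j + 1) = m - j := by omega
    rw [h'] at this
    exact_mod_cast congrArg (Nat.cast : ℕ → ℝ) this
  set a := qNum q x
  set Q := q ^ x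
  set L := Real.log q
  push_cast
  linear_combination (a ^ j * (1 - a) ^ (m - j) * L * Q / (q - 1)) * c1 -
    (a ^ (j + 1) * (1 - a) ^ (m - j - 1) * L * Q / (q - 1)) * c2
end

section
/- For all integers 0 ≤ j ≤ n and all x ∈ [0,1], the power [x]_q^j is the following linear combination of q-Bernstein polynomials: ∑_{k=j}^n (C(k,j)/C(n,j))·B_{k,n}(x,q) = [x]_q^j. -/
lemma qNum_inv (q : ℝ) (hq : 0 < q) (hq1 : q < 1) (x : ℝ) :
    qNum q⁻¹ (1 - x) = 1 - qNum q x := by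
  have hq0 : q ≠ 0 := hq.ne'
  have hq1' : (1 : ℝ) - q ≠ 0 := by linarith
  have hq1'' : (-1 : ℝ) + q ≠ 0 := by intro h; apply hq1'; linarith
  unfold qNum
  rw [Real.inv_rpow hq.le, ← Real.rpow_neg hq.le, neg_sub]
  have hpow : q ^ (x - 1) = q ^ x / q := by
    rw [Real.rpow_sub hq, Real.rpow_one]
  rw [hpow]
  field_simp
  have hinv : (-1 + q) * (-1 + q)⁻¹ = 1 := mul_inv_cancel₀ hq1''
  linear_combination (q ^ x - q) * hinv

/-- `∑_{k=j}^n (C(k,j)/C(n,j))·B_{k,n}(x,q) = [x]_q^j`. -/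
theorem qBernstein_power_representation (q : ℝ) (hq : 0 < q) (hq1 : q < 1)
    (n j : ℕ) (hj : j ≤ n) (x : ℝ) (hx : x ∈ Set.Icc (0 : ℝ) 1) :
    ∑ k ∈ Finset.Icc j n, ((k.choose j : ℝ) / (n.choose j : ℝ)) * qBernstein q k n x
      = qNum q x ^ j := by
  set t := qNum q x with ht
  have hnj : (n.choose j : ℝ) ≠ 0 := by
    exact_mod_cast (Nat.choose_pos hj).ne'
  have key : ∀ k ∈ Finset.Icc j n,
      ((k.choose j : ℝ) / (n.choose j : ℝ)) * qBernstein q k n x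
        = t ^ j * (((n - j).choose (k - j) : ℝ) * t ^ (k - j) * (1 - t) ^ ((n - j) - (k - j))) := by
    intro k hk
    simp only [Finset.mem_Icc] at hk
    obtain ⟨hjk, hkn⟩ := hk
    have hchoose : (n.choose k : ℝ) * (k.choose j : ℝ)
        = (n.choose j : ℝ) * ((n - j).choose (k - j) : ℝ) := by
      exact_mod_cast Nat.choose_mul (n := n) hjk
    have hsub : n - k = (n - j) - (k - j) := by omega
    have hpow : t ^ k = t ^ j * t ^ (k - j) := by
      rw [← pow_add]; congr 1; omega
    rw [qBernstein, qNum_inv q hq hq1, ← ht, hsub, hpow, div_mul_eq_mul_div,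
      div_eq_iff hnj]
    linear_combination (t ^ j * t ^ (k - j) * (1 - t) ^ ((n - j) - (k - j))) * hchoose
  rw [Finset.sum_congr rfl key, ← Finset.mul_sum]
  have hmap : Finset.Icc j n = Finset.map ⟨fun i => i + j, add_left_injective j⟩
      (Finset.range (n - j + 1)) := by
    ext m
    simp only [Finset.mem_map, Finset.mem_range, Finset.mem_Icc, Function.Embedding.coeFn_mk]
    constructor
    · intro h; exact ⟨m - j, by omega, by omega⟩
    · rintro ⟨a, ha, rfl⟩; omega
  have hsum : ∑ k ∈ Finset.Icc j n,
      (((n - j).choose (k - j) : ℝ) * t ^ (k - j) * (1 - t) ^ ((n - j) - (k - j))) = 1 := by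
    rw [hmap, Finset.sum_map]
    simp only [Function.Embedding.coeFn_mk, Nat.add_sub_cancel]
    calc ∑ i ∈ Finset.range (n - j + 1),
          (((n - j).choose i : ℝ) * t ^ i * (1 - t) ^ ((n - j) - i))
        = ∑ i ∈ Finset.range (n - j + 1),
          t ^ i * (1 - t) ^ ((n - j) - i) * ((n - j).choose i : ℝ) :=
          Finset.sum_congr rfl fun i _ => by ring
      _ = (t + (1 - t)) ^ (n - j) := (add_pow t (1 - t) (n - j)).symm
      _ = 1 := by simp
  rw [hsum, mul_one]
end

section
/- For every integer n ≥ 1, the q-Euler polynomial evaluated at 2 satisfies E_{n,q}(2) = 2 + E_{n,q}; explicitly, (2/(1−q)^n)·∑_{l=0}^n C(n,l)·(−1)^l·q^{2l}/(1+q^l) = 2 + (2/(1−q)^n)·∑_{l=0}^n C(n,l)·(−1)^l/(1+q^l). -/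
/-- The q-Euler numbers `E_{n,q} = (2/(1−q)^n)·∑_{l=0}^n C(n,l)·(−1)^l/(1+q^l)`. -/
noncomputable def qEuler (q : ℝ) (n : ℕ) : ℝ :=
  (2 / (1 - q) ^ n) * ∑ l ∈ Finset.range (n + 1), (n.choose l : ℝ) * (-1 : ℝ) ^ l / (1 + q ^ l)

/-- The q-Euler polynomials `E_{n,q}(x) = (2/(1−q)^n)·∑_{l=0}^n C(n,l)·(−1)^l·q^{lx}/(1+q^l)`. -/
noncomputable def qEulerPoly (q : ℝ) (n : ℕ) (x : ℝ) : ℝ :=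
  (2 / (1 - q) ^ n) *
    ∑ l ∈ Finset.range (n + 1),
      (n.choose l : ℝ) * (-1 : ℝ) ^ l * q ^ ((l : ℝ) * x) / (1 + q ^ l)

/-- For `n ≥ 1`: `E_{n,q}(2) = 2 + E_{n,q}`. -/
theorem qEulerPoly_two (q : ℝ) (hq : 0 < q) (hq1 : q < 1) (n : ℕ) (hn : 1 ≤ n) :
    qEulerPoly q n 2 = 2 + qEuler q n := by
  have h1q : (1 : ℝ) - q ≠ 0 := by linarith
  have hpowne : ((1 : ℝ) - q) ^ n ≠ 0 := pow_ne_zero _ h1q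
  have hden : ∀ l : ℕ, (1 : ℝ) + q ^ l ≠ 0 := fun l => by positivity
  have hpow : ∀ l : ℕ, q ^ ((l : ℝ) * 2) = (q ^ l) ^ 2 := by
    intro l
    rw [show ((l : ℝ) * 2) = ((2 * l : ℕ) : ℝ) by push_cast; ring, Real.rpow_natCast]
    ring
  -- term-by-term difference
  have hterm : ∀ l : ℕ,
      (n.choose l : ℝ) * (-1 : ℝ) ^ l * q ^ ((l : ℝ) * 2) / (1 + q ^ l)
        = (n.choose l : ℝ) * (-1 : ℝ) ^ l / (1 + q ^ l)
          + ((n.choose l : ℝ) * (-q) ^ l - (n.choose l : ℝ) * (-1 : ℝ) ^ l) := by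
    intro l
    rw [hpow l]
    field_simp
    ring_nf
  have hsum1 : ∑ l ∈ Finset.range (n + 1), (n.choose l : ℝ) * (-q) ^ l = (1 - q) ^ n := by
    have := add_pow (-q) (1 : ℝ) n
    simp only [one_pow, mul_one] at this
    rw [show (1 : ℝ) - q = -q + 1 by ring, this]
    exact Finset.sum_congr rfl fun l _ => by ring
  have hsum2 : ∑ l ∈ Finset.range (n + 1), (n.choose l : ℝ) * (-1 : ℝ) ^ l = 0 := by
    have := add_pow (-1 : ℝ) (1 : ℝ) n
    simp only [one_pow, mul_one] at this
    have h0 : ((-1 : ℝ) + 1) ^ n = 0 := by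
      rw [show (-1 : ℝ) + 1 = 0 by ring, zero_pow (by omega)]
    rw [h0] at this
    exact (Finset.sum_congr rfl fun l _ => by ring).trans this.symm
  unfold qEulerPoly qEuler
  rw [Finset.sum_congr rfl fun l _ => hterm l, Finset.sum_add_distrib,
    Finset.sum_sub_distrib, hsum1, hsum2, sub_zero]
  field_simp
  ring
end
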